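/- Let D ∈ 𝒜 be invertible and A ∈ 𝒜 with ‖D⁻¹A‖ ≤ 1/4 and ‖A D⁻¹‖ ≤ 1/4, and set X = DA + AD + A². Then 1 + X D⁻² = D (1 + D⁻¹A)(1 + A D⁻¹) D⁻¹, the series Σ_{n≥1} (−1)^{n+1} (X D⁻²)ⁿ/n converges absolutely in 𝒜 (its sum being denoted log(1 + X D⁻²)), and τ(log(1 + X D⁻²)) = 2 τ(log(1 + A D⁻¹)). (This is equation (tracelog1) in the proof of Theorem 2.4(3).) -/

import Mathlib

open scoped BigOperators

/-- `log(1+x)` defined by the series `Σ_{n≥1} (-1)^{n+1} xⁿ/n`. -/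
noncomputable def log1p {𝒜 : Type*} [NormedRing 𝒜] [NormedAlgebra ℂ 𝒜] (x : 𝒜) : 𝒜 :=
  ∑' n : ℕ, ((-1 : ℂ) ^ n / (n + 1)) • x ^ (n + 1)

section Aux

variable {𝒜 : Type*} [NormedRing 𝒜] [NormedAlgebra ℂ 𝒜] [CompleteSpace 𝒜]

lemma coef_mul_succ (n : ℕ) : ((-1 : ℂ) ^ n / (n + 1)) * ((n : ℂ) + 1) = (-1) ^ n := by
  have h : ((n : ℂ) + 1) ≠ 0 := by
    have : ((n + 1 : ℕ) : ℂ) ≠ 0 := Nat.cast_ne_zero.mpr n.succ_ne_zero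
    push_cast at this; exact this
  field_simp

lemma coef_norm_le (n : ℕ) : ‖((-1 : ℂ) ^ n / (n + 1))‖ ≤ 1 := by
  have h : ((n : ℂ) + 1) = ((n + 1 : ℕ) : ℂ) := by push_cast; ring
  rw [norm_div, norm_pow, norm_neg, norm_one, one_pow, h, Complex.norm_natCast]
  rw [div_le_one (by positivity)]
  exact_mod_cast Nat.one_le_iff_ne_zero.mpr n.succ_ne_zero

lemma summable_norm_log1p (x : 𝒜) (hx : ‖x‖ < 1) :
    Summable (fun n : ℕ => ‖((-1 : ℂ) ^ n / (n + 1)) • x ^ (n + 1)‖) := by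
  refine Summable.of_nonneg_of_le (fun n => norm_nonneg _) (fun n => ?_)
    ((summable_geometric_of_lt_one (norm_nonneg x) hx).mul_right ‖x‖)
  calc ‖((-1 : ℂ) ^ n / (n + 1)) • x ^ (n + 1)‖
      ≤ ‖((-1 : ℂ) ^ n / (n + 1))‖ * ‖x ^ (n + 1)‖ := norm_smul_le _ _
    _ ≤ 1 * ‖x‖ ^ (n + 1) :=
        mul_le_mul (coef_norm_le n) (norm_pow_le' x n.succ_pos) (norm_nonneg _) zero_le_one
    _ = ‖x‖ ^ n * ‖x‖ := by rw [one_mul, pow_succ]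

lemma summable_log1p (x : 𝒜) (hx : ‖x‖ < 1) :
    Summable (fun n : ℕ => ((-1 : ℂ) ^ n / (n + 1)) • x ^ (n + 1)) :=
  (summable_norm_log1p x hx).of_norm

lemma tau_log1p' (τ : 𝒜 →L[ℂ] ℂ) (x : 𝒜)
    (hx : Summable (fun n : ℕ => ((-1 : ℂ) ^ n / (n + 1)) • x ^ (n + 1))) :
    τ (log1p x) = ∑' n : ℕ, ((-1 : ℂ) ^ n / (n + 1)) * τ (x ^ (n + 1)) := by
  rw [log1p, τ.map_tsum hx]
  exact tsum_congr fun n => by rw [map_smul, smul_eq_mul]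

lemma tau_log1p (τ : 𝒜 →L[ℂ] ℂ) (x : 𝒜) (hx : ‖x‖ < 1) :
    τ (log1p x) = ∑' n : ℕ, ((-1 : ℂ) ^ n / (n + 1)) * τ (x ^ (n + 1)) :=
  tau_log1p' τ x (summable_log1p x hx)

lemma mul_pow_shift (a b : 𝒜) : ∀ n : ℕ, (a * b) ^ (n + 1) = a * ((b * a) ^ n * b)
  | 0 => by simp
  | (n + 1) => by
      rw [pow_succ, mul_pow_shift a b n, pow_succ]
      simp only [mul_assoc]

lemma trace_cyclic_pow (τ : 𝒜 →L[ℂ] ℂ) (htr : ∀ x y : 𝒜, τ (x * y) = τ (y * x))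
    (a b : 𝒜) (n : ℕ) : τ ((a * b) ^ (n + 1)) = τ ((b * a) ^ (n + 1)) := by
  rw [mul_pow_shift a b n, htr, mul_assoc, ← pow_succ]

lemma conjPow (D Dinv : 𝒜) (hDinv : Dinv * D = 1) (w : 𝒜) :
    ∀ n : ℕ, (D * w * Dinv) ^ (n + 1) = D * w ^ (n + 1) * Dinv
  | 0 => by simp
  | (n + 1) => by
      have hc2 : ∀ z : 𝒜, Dinv * (D * z) = z := fun z => by
        rw [← mul_assoc, hDinv, one_mul]
      rw [pow_succ, conjPow D Dinv hDinv w n]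
      simp only [pow_succ, mul_assoc, hc2]

lemma hasDerivAt_pow_path {y : ℝ → 𝒜} {yd : 𝒜} {t : ℝ} (hy : HasDerivAt y yd t) :
    ∀ n : ℕ, HasDerivAt (fun s => (y s) ^ n)
      (∑ i ∈ Finset.range n, (y t) ^ i * yd * (y t) ^ (n - 1 - i)) t
  | 0 => by simpa using hasDerivAt_const t (1 : 𝒜)
  | (n + 1) => by
      have h := (hasDerivAt_pow_path hy n).fun_mul hy
      simp only [← pow_succ] at h
      convert h using 1
      rw [Finset.sum_range_succ, Finset.sum_mul]
      congr 1
      · refine Finset.sum_congr rfl fun i hi => ?_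
        have hi' : i < n := Finset.mem_range.mp hi
        have h2 : n - 1 - i + 1 = n + 1 - 1 - i := by omega
        rw [mul_assoc (y t ^ i * yd), ← pow_succ, h2]
      · have : n + 1 - 1 - n = 0 := by omega
        rw [this, pow_zero, mul_one]

lemma hasDerivAt_tau_pow (τ : 𝒜 →L[ℂ] ℂ) (htr : ∀ x y : 𝒜, τ (x * y) = τ (y * x))
    {y : ℝ → 𝒜} {yd : 𝒜} {t : ℝ} (hy : HasDerivAt y yd t) (n : ℕ) :
    HasDerivAt (fun s => τ ((y s) ^ (n + 1))) (((n : ℂ) + 1) * τ ((y t) ^ n * yd)) t := by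
  have h := (τ.restrictScalars ℝ).hasFDerivAt.comp_hasDerivAt t (hasDerivAt_pow_path hy (n + 1))
  have heq : (τ.restrictScalars ℝ)
      (∑ i ∈ Finset.range (n + 1), (y t) ^ i * yd * (y t) ^ (n + 1 - 1 - i))
      = ((n : ℂ) + 1) * τ ((y t) ^ n * yd) := by
    rw [ContinuousLinearMap.coe_restrictScalars', map_sum]
    have hterm : ∀ i ∈ Finset.range (n + 1),
        τ ((y t) ^ i * yd * (y t) ^ (n + 1 - 1 - i)) = τ ((y t) ^ n * yd) := by
      intro i hi
      have hi' : i ≤ n := Nat.lt_succ_iff.mp (Finset.mem_range.mp hi)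
      have h1 : n + 1 - 1 - i = n - i := by omega
      rw [h1, htr, ← mul_assoc, ← pow_add, Nat.sub_add_cancel hi']
    rw [Finset.sum_congr rfl hterm, Finset.sum_const, Finset.card_range, nsmul_eq_mul]
    push_cast; ring
  rw [← heq]
  exact h

lemma hasDerivAt_tau_log1p (τ : 𝒜 →L[ℂ] ℂ) (htr : ∀ x y : 𝒜, τ (x * y) = τ (y * x))
    {p pd : ℝ → 𝒜}
    (hp : ∀ s ∈ Metric.ball (0 : ℝ) (6/5), HasDerivAt p (pd s) s)
    (hpn : ∀ s ∈ Metric.ball (0 : ℝ) (6/5), ‖p s‖ ≤ 7/10)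
    (hpd : ∀ s ∈ Metric.ball (0 : ℝ) (6/5), ‖pd s‖ ≤ 1)
    (hp0 : p 0 = 0) {t : ℝ} (ht : t ∈ Metric.ball (0 : ℝ) (6/5)) :
    HasDerivAt (fun s => τ (log1p (p s)))
      (∑' n : ℕ, (-1 : ℂ) ^ n * τ ((p t) ^ n * pd t)) t := by
  set B : ℝ := max ‖(1 : 𝒜)‖ 1 with hB
  have hB1 : (1 : ℝ) ≤ B := le_max_right _ _
  have hBpow : ∀ (x : 𝒜) (n : ℕ), ‖x ^ n‖ ≤ B * ‖x‖ ^ n := by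
    intro x n
    cases n with
    | zero => rw [pow_zero, pow_zero, mul_one]; exact le_max_left _ _
    | succ m =>
        calc ‖x ^ (m + 1)‖ ≤ ‖x‖ ^ (m + 1) := norm_pow_le' x m.succ_pos
          _ ≤ B * ‖x‖ ^ (m + 1) := le_mul_of_one_le_left (by positivity) hB1
  have hopen : IsOpen (Metric.ball (0 : ℝ) (6/5)) := Metric.isOpen_ball
  have hconn : IsPreconnected (Metric.ball (0 : ℝ) (6/5)) :=
    (convex_ball (0 : ℝ) (6/5)).isPreconnected
  have h0 : (0 : ℝ) ∈ Metric.ball (0 : ℝ) (6/5) := Metric.mem_ball_self (by norm_num)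
  have hsumu : Summable (fun n : ℕ => (‖τ‖ * B) * (7/10 : ℝ) ^ n) :=
    (summable_geometric_of_lt_one (by norm_num) (by norm_num)).mul_left _
  have hgd : ∀ (n : ℕ), ∀ s ∈ Metric.ball (0 : ℝ) (6/5),
      HasDerivAt (fun z => ((-1 : ℂ) ^ n / (n + 1)) * τ ((p z) ^ (n + 1)))
        ((-1 : ℂ) ^ n * τ ((p s) ^ n * pd s)) s := by
    intro n s hs
    have h := (hasDerivAt_tau_pow τ htr (hp s hs) n).const_mul ((-1 : ℂ) ^ n / (n + 1))
    have : ((-1 : ℂ) ^ n / (n + 1)) * (((n : ℂ) + 1) * τ ((p s) ^ n * pd s))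
        = (-1 : ℂ) ^ n * τ ((p s) ^ n * pd s) := by
      rw [← mul_assoc, coef_mul_succ]
    rwa [this] at h
  have hbound : ∀ (n : ℕ), ∀ s ∈ Metric.ball (0 : ℝ) (6/5),
      ‖(-1 : ℂ) ^ n * τ ((p s) ^ n * pd s)‖ ≤ (‖τ‖ * B) * (7/10 : ℝ) ^ n := by
    intro n s hs
    have h1 : ‖(-1 : ℂ) ^ n * τ ((p s) ^ n * pd s)‖ = ‖τ ((p s) ^ n * pd s)‖ := by
      rw [norm_mul, norm_pow, norm_neg, norm_one, one_pow, one_mul]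
    rw [h1]
    calc ‖τ ((p s) ^ n * pd s)‖ ≤ ‖τ‖ * ‖(p s) ^ n * pd s‖ := τ.le_opNorm _
      _ ≤ ‖τ‖ * (‖(p s) ^ n‖ * ‖pd s‖) :=
          mul_le_mul_of_nonneg_left (norm_mul_le _ _) (norm_nonneg _)
      _ ≤ ‖τ‖ * ((B * (7/10 : ℝ) ^ n) * 1) := by
          refine mul_le_mul_of_nonneg_left ?_ (norm_nonneg _)
          refine mul_le_mul ?_ (hpd s hs) (norm_nonneg _) (by positivity)
          refine le_trans (hBpow _ _) ?_
          refine mul_le_mul_of_nonneg_left ?_ (by linarith)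
          exact pow_le_pow_left₀ (norm_nonneg _) (hpn s hs) n
      _ = (‖τ‖ * B) * (7/10 : ℝ) ^ n := by ring
  have hg0 : Summable (fun n : ℕ => ((-1 : ℂ) ^ n / (n + 1)) * τ ((p 0) ^ (n + 1))) := by
    have : ∀ n : ℕ, ((-1 : ℂ) ^ n / (n + 1)) * τ ((p 0) ^ (n + 1)) = 0 := by
      intro n
      rw [hp0, zero_pow n.succ_ne_zero, map_zero, mul_zero]
    simpa [this] using summable_zero
  have H := hasDerivAt_tsum_of_isPreconnected hsumu hopen hconn hgd hbound h0 hg0 ht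
  refine H.congr_of_eventuallyEq ?_
  filter_upwards [hopen.mem_nhds ht] with s hs
  exact tau_log1p τ (p s) (lt_of_le_of_lt (hpn s hs) (by norm_num))

lemma key_sum (τ : 𝒜 →L[ℂ] ℂ) (htr : ∀ x y : 𝒜, τ (x * y) = τ (y * x))
    (u v : 𝒜) (t : ℝ) (ha : ‖t • u‖ < 1) (hb : ‖t • v‖ < 1)
    (hx : ‖t • u + t • v + (t * t) • (u * v)‖ < 1) :
    ∑' n : ℕ, (-1 : ℂ) ^ n *
        τ ((t • u + t • v + (t * t) • (u * v)) ^ n * (u + v + (t + t) • (u * v)))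
      = (∑' n : ℕ, (-1 : ℂ) ^ n * τ ((t • u) ^ n * u))
        + ∑' n : ℕ, (-1 : ℂ) ^ n * τ ((t • v) ^ n * v) := by
  have main : ∀ (w z : 𝒜), ‖w‖ < 1 →
      (∑' n : ℕ, (-1 : ℂ) ^ n * τ (w ^ n * z)) = τ ((∑' n : ℕ, (-w) ^ n) * z) := by
    intro w z hw
    have hw' : ‖-w‖ < 1 := by rwa [norm_neg]
    have hsum : Summable (fun n : ℕ => (-w) ^ n) := summable_geometric_of_norm_lt_one hw'
    have hterm : ∀ n : ℕ, (-1 : ℂ) ^ n * τ (w ^ n * z) = τ ((-w) ^ n * z) := by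
      intro n
      have h1 : (-w) = (-1 : ℂ) • w := (neg_one_smul ℂ w).symm
      rw [h1, smul_pow, smul_mul_assoc, map_smul, smul_eq_mul]
    calc ∑' n : ℕ, (-1 : ℂ) ^ n * τ (w ^ n * z)
        = ∑' n : ℕ, τ ((-w) ^ n * z) := tsum_congr hterm
      _ = τ (∑' n : ℕ, (-w) ^ n * z) := (τ.map_tsum (hsum.mul_right z)).symm
      _ = τ ((∑' n : ℕ, (-w) ^ n) * z) := by rw [hsum.tsum_mul_right]
  set a := t • u with hadef
  set b := t • v with hbdef
  have hab : a * b = (t * t) • (u * v) := by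
    rw [hadef, hbdef, smul_mul_smul_comm]
  have hP : ‖-a‖ < 1 := by rwa [norm_neg]
  have hQ : ‖-b‖ < 1 := by rwa [norm_neg]
  have hX : ‖-(a + b + (t * t) • (u * v))‖ < 1 := by rwa [norm_neg]
  set P : 𝒜ˣ := Units.oneSub (-a) hP with hPdef
  set Q : 𝒜ˣ := Units.oneSub (-b) hQ with hQdef
  set U : 𝒜ˣ := Units.oneSub (-(a + b + (t * t) • (u * v))) hX with hUdef
  have hUeq : U = P * Q := by
    apply Units.ext
    rw [Units.val_mul, hUdef, hPdef, hQdef]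
    show (1 : 𝒜) - -(a + b + (t * t) • (u * v)) = (1 - -a) * (1 - -b)
    rw [← hab]
    noncomm_ring
  have hinv : (∑' n : ℕ, (-(a + b + (t * t) • (u * v))) ^ n) = (↑Q⁻¹ * ↑P⁻¹ : 𝒜) := by
    have h1 : ((U⁻¹ : 𝒜ˣ) : 𝒜) = ∑' n : ℕ, (-(a + b + (t * t) • (u * v))) ^ n := rfl
    rw [← h1, hUeq, mul_inv_rev, Units.val_mul]
  have hPinv : (∑' n : ℕ, (-a) ^ n) = (↑P⁻¹ : 𝒜) := rfl
  have hQinv : (∑' n : ℕ, (-b) ^ n) = (↑Q⁻¹ : 𝒜) := rfl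
  rw [main _ (u + v + (t + t) • (u * v)) hx, main a u ha, main b v hb, hinv, hPinv, hQinv]
  have hxd : u + v + (t + t) • (u * v) = u * (Q : 𝒜) + (P : 𝒜) * v := by
    show _ = u * ((1 : 𝒜) - -b) + ((1 : 𝒜) - -a) * v
    rw [sub_neg_eq_add, sub_neg_eq_add, hadef, hbdef, mul_add, add_mul, mul_one, one_mul,
      mul_smul_comm, smul_mul_assoc, add_smul]
    abel
  rw [hxd, mul_add, map_add]
  congr 1
  · rw [htr (↑Q⁻¹ * ↑P⁻¹ : 𝒜) (u * (Q : 𝒜))]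
    have h2 : (u * (Q : 𝒜)) * ((↑Q⁻¹ : 𝒜) * (↑P⁻¹ : 𝒜)) = u * (↑P⁻¹ : 𝒜) := by
      rw [mul_assoc, ← mul_assoc (Q : 𝒜), Units.mul_inv, one_mul]
    rw [h2, htr]
  · rw [mul_assoc, Units.inv_mul_cancel_left]

lemma trace_log1p_mul (τ : 𝒜 →L[ℂ] ℂ) (htr : ∀ x y : 𝒜, τ (x * y) = τ (y * x))
    (u v : 𝒜) (hu : ‖u‖ ≤ 1/4) (hv : ‖v‖ ≤ 1/4) :
    τ (log1p (u + v + u * v)) = τ (log1p u) + τ (log1p v) := by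
  have huv : ‖u * v‖ ≤ 1/16 := by
    calc ‖u * v‖ ≤ ‖u‖ * ‖v‖ := norm_mul_le u v
      _ ≤ 1/16 := by nlinarith [norm_nonneg u, norm_nonneg v]
  have hmem : ∀ t : ℝ, t ∈ Metric.ball (0 : ℝ) (6/5) → |t| < 6/5 := by
    intro t ht
    rwa [Metric.mem_ball, Real.dist_eq, sub_zero] at ht
  have hsmul : ∀ (t : ℝ) (z : 𝒜), ‖t • z‖ = |t| * ‖z‖ := fun t z => by
    rw [norm_smul, Real.norm_eq_abs]
  -- norm bounds for the path
  have hxn : ∀ t ∈ Metric.ball (0 : ℝ) (6/5),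
      ‖t • u + t • v + (t * t) • (u * v)‖ ≤ 7/10 := by
    intro t ht
    have h := (hmem t ht).le
    have h0 : (0:ℝ) ≤ |t| := abs_nonneg t
    calc ‖t • u + t • v + (t * t) • (u * v)‖
        ≤ ‖t • u‖ + ‖t • v‖ + ‖(t * t) • (u * v)‖ := norm_add₃_le
      _ = |t| * ‖u‖ + |t| * ‖v‖ + |t * t| * ‖u * v‖ := by rw [hsmul, hsmul, hsmul]
      _ ≤ (6/5) * (1/4) + (6/5) * (1/4) + ((6/5) * (6/5)) * (1/16) := by
          rw [abs_mul]
          have e1 := mul_le_mul h hu (norm_nonneg u) (by norm_num : (0:ℝ) ≤ 6/5)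
          have e2 := mul_le_mul h hv (norm_nonneg v) (by norm_num : (0:ℝ) ≤ 6/5)
          have e3 : |t| * |t| ≤ (6/5) * (6/5) := mul_le_mul h h h0 (by norm_num)
          have e4 := mul_le_mul e3 huv (norm_nonneg (u * v)) (by norm_num)
          linarith
      _ ≤ 7/10 := by norm_num
  have hun : ∀ (w : 𝒜), ‖w‖ ≤ 1/4 → ∀ t ∈ Metric.ball (0 : ℝ) (6/5), ‖t • w‖ ≤ 3/10 := by
    intro w hw t ht
    have h := (hmem t ht).le
    rw [hsmul]
    calc |t| * ‖w‖ ≤ (6/5) * (1/4) := mul_le_mul h hw (norm_nonneg w) (by norm_num)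
      _ = 3/10 := by norm_num
  have hxd : ∀ t ∈ Metric.ball (0 : ℝ) (6/5), ‖u + v + (t + t) • (u * v)‖ ≤ 1 := by
    intro t ht
    have h := (hmem t ht).le
    have h0 : (0:ℝ) ≤ |t| := abs_nonneg t
    calc ‖u + v + (t + t) • (u * v)‖
        ≤ ‖u‖ + ‖v‖ + ‖(t + t) • (u * v)‖ := norm_add₃_le
      _ = ‖u‖ + ‖v‖ + |t + t| * ‖u * v‖ := by rw [hsmul]
      _ ≤ 1/4 + 1/4 + (12/5) * (1/16) := by
          have habs : |t + t| ≤ 12/5 := by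
            calc |t + t| ≤ |t| + |t| := abs_add_le t t
              _ ≤ 12/5 := by linarith
          have e4 := mul_le_mul habs huv (norm_nonneg (u * v)) (by norm_num : (0:ℝ) ≤ 12/5)
          linarith
      _ ≤ 1 := by norm_num
  -- derivatives of the paths
  have hpx : ∀ t : ℝ, HasDerivAt (fun r : ℝ => r • u + r • v + (r * r) • (u * v))
      (u + v + (t + t) • (u * v)) t := by
    intro t
    have h1 : HasDerivAt (fun r : ℝ => r • u) ((1 : ℝ) • u) t :=
      (hasDerivAt_id t).smul_const u
    have h2 : HasDerivAt (fun r : ℝ => r • v) ((1 : ℝ) • v) t :=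
      (hasDerivAt_id t).smul_const v
    have h3 : HasDerivAt (fun r : ℝ => (r * r) • (u * v)) ((1 * t + t * 1) • (u * v)) t :=
      ((hasDerivAt_id t).mul (hasDerivAt_id t)).smul_const (u * v)
    have h := (h1.fun_add h2).fun_add h3
    simpa [one_smul, one_mul, mul_one] using h
  have hpw : ∀ (w : 𝒜) (t : ℝ), HasDerivAt (fun r : ℝ => r • w) w t := by
    intro w t
    simpa using (hasDerivAt_id t).smul_const w
  -- the three tsum derivatives
  have Hx : ∀ t ∈ Metric.ball (0 : ℝ) (6/5),
      HasDerivAt (fun s : ℝ => τ (log1p (s • u + s • v + (s * s) • (u * v))))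
        (∑' n : ℕ, (-1 : ℂ) ^ n *
          τ ((t • u + t • v + (t * t) • (u * v)) ^ n * (u + v + (t + t) • (u * v)))) t := by
    intro t ht
    exact hasDerivAt_tau_log1p τ htr (fun s _ => hpx s) hxn hxd (by simp) ht
  have Hu : ∀ t ∈ Metric.ball (0 : ℝ) (6/5),
      HasDerivAt (fun s : ℝ => τ (log1p (s • u)))
        (∑' n : ℕ, (-1 : ℂ) ^ n * τ ((t • u) ^ n * u)) t := by
    intro t ht
    refine hasDerivAt_tau_log1p τ htr (fun s _ => hpw u s)
      (fun s hs => le_trans (hun u hu s hs) (by norm_num))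
      (fun s _ => le_trans hu (by norm_num)) (by simp) ht
  have Hv : ∀ t ∈ Metric.ball (0 : ℝ) (6/5),
      HasDerivAt (fun s : ℝ => τ (log1p (s • v)))
        (∑' n : ℕ, (-1 : ℂ) ^ n * τ ((t • v) ^ n * v)) t := by
    intro t ht
    refine hasDerivAt_tau_log1p τ htr (fun s _ => hpw v s)
      (fun s hs => le_trans (hun v hv s hs) (by norm_num))
      (fun s _ => le_trans hv (by norm_num)) (by simp) ht
  -- the difference function is constant
  set F : ℝ → ℂ := fun t =>
    τ (log1p (t • u + t • v + (t * t) • (u * v))) - τ (log1p (t • u)) - τ (log1p (t • v))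
    with hF
  have Hder : ∀ t ∈ Metric.ball (0 : ℝ) (6/5), HasDerivAt F 0 t := by
    intro t ht
    have h := ((Hx t ht).fun_sub (Hu t ht)).fun_sub (Hv t ht)
    have hkey := key_sum τ htr u v t
      (lt_of_le_of_lt (hun u hu t ht) (by norm_num))
      (lt_of_le_of_lt (hun v hv t ht) (by norm_num))
      (lt_of_le_of_lt (hxn t ht) (by norm_num))
    rw [hkey] at h
    simpa using h
  have hsub : Set.Icc (0 : ℝ) 1 ⊆ Metric.ball (0 : ℝ) (6/5) := by
    intro t ht
    rw [Metric.mem_ball, Real.dist_eq, sub_zero]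
    rw [Set.mem_Icc] at ht
    rw [abs_lt]
    constructor <;> linarith [ht.1, ht.2]
  have hcont : ContinuousOn F (Set.Icc 0 1) := fun t ht =>
    (Hder t (hsub ht)).continuousAt.continuousWithinAt
  have hd : ∀ t ∈ Set.Ico (0 : ℝ) 1, HasDerivWithinAt F 0 (Set.Ici t) t := fun t ht =>
    (Hder t (hsub ⟨ht.1, ht.2.le⟩)).hasDerivWithinAt
  have h10 := constant_of_has_deriv_right_zero hcont hd 1 (by norm_num)
  have hlog0 : log1p (0 : 𝒜) = 0 := by
    rw [log1p]
    have : ∀ n : ℕ, ((-1 : ℂ) ^ n / (n + 1)) • (0 : 𝒜) ^ (n + 1) = 0 := by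
      intro n; rw [zero_pow n.succ_ne_zero, smul_zero]
    simp [this]
  have hF0 : F 0 = 0 := by
    rw [hF]
    simp [hlog0]
  have hF1 : F 1 = 0 := h10.trans hF0
  rw [hF] at hF1
  simp only [one_smul, one_mul] at hF1
  linear_combination hF1

end Aux

/-- for `D` invertible, `‖D⁻¹A‖ ≤ 1/4`, `‖AD⁻¹‖ ≤ 1/4`, and
`X = DA + AD + A²`: one has `1 + XD⁻² = D(1 + D⁻¹A)(1 + AD⁻¹)D⁻¹`, the logarithm
series of `1 + XD⁻²` converges absolutely, and
`τ(log(1 + XD⁻²)) = 2 τ(log(1 + AD⁻¹))`. -/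
theorem stmt13 {𝒜 : Type*} [NormedRing 𝒜] [NormedAlgebra ℂ 𝒜] [CompleteSpace 𝒜]
    (τ : 𝒜 →L[ℂ] ℂ) (htr : ∀ x y : 𝒜, τ (x * y) = τ (y * x))
    (D Dinv : 𝒜) (hD : D * Dinv = 1) (hDinv : Dinv * D = 1)
    (A : 𝒜) (h1 : ‖Dinv * A‖ ≤ 1 / 4) (h2 : ‖A * Dinv‖ ≤ 1 / 4) :
    (1 : 𝒜) + (D * A + A * D + A * A) * (Dinv * Dinv) =
        D * (1 + Dinv * A) * (1 + A * Dinv) * Dinv ∧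
      Summable (fun n : ℕ =>
        ‖((-1 : ℂ) ^ n / (n + 1)) •
          ((D * A + A * D + A * A) * (Dinv * Dinv)) ^ (n + 1)‖) ∧
      τ (log1p ((D * A + A * D + A * A) * (Dinv * Dinv))) =
        2 * τ (log1p (A * Dinv)) := by
  have hc1 : ∀ z : 𝒜, D * (Dinv * z) = z := fun z => by rw [← mul_assoc, hD, one_mul]
  have hc2 : ∀ z : 𝒜, Dinv * (D * z) = z := fun z => by rw [← mul_assoc, hDinv, one_mul]
  set u : 𝒜 := Dinv * A with hu
  set v : 𝒜 := A * Dinv with hv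
  set w : 𝒜 := u + v + u * v with hw
  have hY : (D * A + A * D + A * A) * (Dinv * Dinv) = D * w * Dinv := by
    rw [hw, hu, hv]
    simp only [mul_add, add_mul, mul_assoc, hc1, hc2]
    abel
  have hwn : ‖w‖ ≤ 9/16 := by
    have huv : ‖u * v‖ ≤ 1/16 := by
      calc ‖u * v‖ ≤ ‖u‖ * ‖v‖ := norm_mul_le u v
        _ ≤ 1/16 := by nlinarith [norm_nonneg u, norm_nonneg v]
    calc ‖w‖ ≤ ‖u‖ + ‖v‖ + ‖u * v‖ := norm_add₃_le
      _ ≤ 9/16 := by linarith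
  have hwlt : ‖w‖ < 1 := lt_of_le_of_lt hwn (by norm_num)
  refine ⟨?_, ?_, ?_⟩
  · -- algebraic identity
    rw [hY]
    have : D * (1 + Dinv * A) * (1 + A * Dinv) * Dinv = D * ((1 + u) * (1 + v)) * Dinv := by
      rw [hu, hv]; simp only [mul_assoc]
    rw [this]
    have hexp : (1 + u) * (1 + v) = 1 + w := by rw [hw]; noncomm_ring
    rw [hexp]
    have part1 : ∀ z : 𝒜, D * (1 + z) * Dinv = 1 + D * z * Dinv := fun z => by
      rw [mul_add, mul_one, add_mul, hD]
    exact (part1 w).symm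
  · -- summability
    rw [hY]
    have hsum : Summable (fun n : ℕ => ((‖D‖ * ‖Dinv‖ * (9/16)) * (9/16 : ℝ) ^ n)) :=
      (summable_geometric_of_lt_one (by norm_num) (by norm_num)).mul_left _
    refine Summable.of_nonneg_of_le (fun n => norm_nonneg _) (fun n => ?_) hsum
    rw [conjPow D Dinv hDinv w n]
    calc ‖((-1 : ℂ) ^ n / (n + 1)) • (D * w ^ (n + 1) * Dinv)‖
        ≤ ‖((-1 : ℂ) ^ n / (n + 1))‖ * ‖D * w ^ (n + 1) * Dinv‖ := norm_smul_le _ _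
      _ ≤ 1 * ‖D * w ^ (n + 1) * Dinv‖ :=
          mul_le_mul_of_nonneg_right (coef_norm_le n) (norm_nonneg _)
      _ = ‖D * w ^ (n + 1) * Dinv‖ := one_mul _
      _ ≤ ‖D * w ^ (n + 1)‖ * ‖Dinv‖ := norm_mul_le _ _
      _ ≤ ‖D‖ * ‖w ^ (n + 1)‖ * ‖Dinv‖ :=
          mul_le_mul_of_nonneg_right (norm_mul_le _ _) (norm_nonneg _)
      _ ≤ ‖D‖ * ((9/16 : ℝ) ^ (n + 1)) * ‖Dinv‖ := by
          refine mul_le_mul_of_nonneg_right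
            (mul_le_mul_of_nonneg_left ?_ (norm_nonneg D)) (norm_nonneg Dinv)
          exact le_trans (norm_pow_le' w n.succ_pos)
            (pow_le_pow_left₀ (norm_nonneg w) hwn (n + 1))
      _ = (‖D‖ * ‖Dinv‖ * (9/16)) * (9/16 : ℝ) ^ n := by rw [pow_succ]; ring
  · -- the trace identity
    have hsummable : Summable (fun n : ℕ =>
        ((-1 : ℂ) ^ n / (n + 1)) • ((D * A + A * D + A * A) * (Dinv * Dinv)) ^ (n + 1)) := by
      apply Summable.of_norm
      -- reuse the bound from the previous part
      rw [hY]
      have hsum : Summable (fun n : ℕ => ((‖D‖ * ‖Dinv‖ * (9/16)) * (9/16 : ℝ) ^ n)) :=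
        (summable_geometric_of_lt_one (by norm_num) (by norm_num)).mul_left _
      refine Summable.of_nonneg_of_le (fun n => norm_nonneg _) (fun n => ?_) hsum
      rw [conjPow D Dinv hDinv w n]
      calc ‖((-1 : ℂ) ^ n / (n + 1)) • (D * w ^ (n + 1) * Dinv)‖
          ≤ ‖((-1 : ℂ) ^ n / (n + 1))‖ * ‖D * w ^ (n + 1) * Dinv‖ := norm_smul_le _ _
        _ ≤ 1 * ‖D * w ^ (n + 1) * Dinv‖ :=
            mul_le_mul_of_nonneg_right (coef_norm_le n) (norm_nonneg _)
        _ = ‖D * w ^ (n + 1) * Dinv‖ := one_mul _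
        _ ≤ ‖D * w ^ (n + 1)‖ * ‖Dinv‖ := norm_mul_le _ _
        _ ≤ ‖D‖ * ‖w ^ (n + 1)‖ * ‖Dinv‖ :=
            mul_le_mul_of_nonneg_right (norm_mul_le _ _) (norm_nonneg _)
        _ ≤ ‖D‖ * ((9/16 : ℝ) ^ (n + 1)) * ‖Dinv‖ := by
            refine mul_le_mul_of_nonneg_right
              (mul_le_mul_of_nonneg_left ?_ (norm_nonneg D)) (norm_nonneg Dinv)
            exact le_trans (norm_pow_le' w n.succ_pos)
              (pow_le_pow_left₀ (norm_nonneg w) hwn (n + 1))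
        _ = (‖D‖ * ‖Dinv‖ * (9/16)) * (9/16 : ℝ) ^ n := by rw [pow_succ]; ring
    have step1 : τ (log1p ((D * A + A * D + A * A) * (Dinv * Dinv))) = τ (log1p w) := by
      rw [tau_log1p' τ _ hsummable, tau_log1p τ w hwlt]
      refine tsum_congr fun n => ?_
      congr 1
      rw [hY, conjPow D Dinv hDinv w n, htr, ← mul_assoc, hDinv, one_mul]
    have step2 : τ (log1p w) = τ (log1p u) + τ (log1p v) := by
      rw [hw]
      exact trace_log1p_mul τ htr u v h1 h2
    have step3 : τ (log1p u) = τ (log1p v) := by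
      have hult : ‖u‖ < 1 := lt_of_le_of_lt h1 (by norm_num)
      have hvlt : ‖v‖ < 1 := lt_of_le_of_lt h2 (by norm_num)
      rw [tau_log1p τ u hult, tau_log1p τ v hvlt]
      refine tsum_congr fun n => ?_
      congr 1
      rw [hu, hv]
      exact trace_cyclic_pow τ htr Dinv A n
    rw [step1, step2, step3, hv, two_mul]
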